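/- Suppose ν ≥ (1/(4(1−μ)))·max{ min{ ‖u²‖₂²/‖u‖₂⁴ , ‖h‖₂²/μ² } , min{ ‖u‖₂²/‖u‖₁² , ‖h‖₂²/μ² } }. Then 𝔏̃'(ν,μ,u,h) ≤ 𝔏̃(ν,μ,u). (This is Proposition 5.3(ii), comparing the two Gaussian bounds for the approximated first chaos of a stationary linear Hawkes process.) -/

import Mathlib

open MeasureTheory Real Filter
open scoped ENNReal

/-- The `L^p` norm (with respect to Lebesgue measure on `ℝ`) as a real number. -/
noncomputable def lpNorm (p : ℝ≥0∞) (f : ℝ → ℝ) : ℝ :=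
  (eLpNorm f p volume).toReal

/-- The Gaussian bound `𝔏(ν,μ,u)` of Theorem 5.1. -/
noncomputable def Lbound (ν μ : ℝ) (u : ℝ → ℝ) : ℝ :=
  Real.sqrt (2 / π) * |1 - ν / (1 - μ) * lpNorm 2 u ^ 2|
    + ν / (1 - μ) * lpNorm 3 u ^ 3
    + 2 * Real.sqrt (2 / π) * ν * μ * (2 - μ) / (1 - μ) ^ 2 * lpNorm 2 u ^ 2
    + ν * μ / (1 - μ) ^ 2 * lpNorm 2 u * lpNorm 2 (fun t => u t ^ 2)

/-- The spectral-theory Gaussian bound `𝔏'(ν,μ,u,h)` of Theorem 5.2. -/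
noncomputable def Lbound' (ν μ : ℝ) (u h : ℝ → ℝ) : ℝ :=
  Real.sqrt (2 / π) *
      Real.sqrt ((1 - ν / (1 - μ) * lpNorm 2 u ^ 2) ^ 2
        + ν / (1 - μ) ^ 3 *
            min (μ ^ 2 * lpNorm 2 (fun t => u t ^ 2) ^ 2)
              (lpNorm 2 h ^ 2 * lpNorm 1 (fun t => u t ^ 2) ^ 2))
    + ν / (1 - μ) * lpNorm 3 u ^ 3
    + 2 * Real.sqrt (2 / π) * ν * μ / (1 - μ) ^ 2 * lpNorm 2 u ^ 2
    + ν * μ / (1 - μ) ^ 2 * lpNorm 2 u * lpNorm 2 (fun t => u t ^ 2)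

/-- The bound `𝔏̃(ν,μ,u)` for the approximated first chaos (Theorem 5.1). -/
noncomputable def LboundTilde (ν μ : ℝ) (u : ℝ → ℝ) : ℝ :=
  Lbound ν μ u + 2 * ν * μ / (1 - μ) * lpNorm 1 u

/-- The bound `𝔏̃'(ν,μ,u,h)` for the approximated first chaos (Theorem 5.2). -/
noncomputable def LboundTilde' (ν μ : ℝ) (u h : ℝ → ℝ) : ℝ :=
  Lbound' ν μ u h
    + Real.sqrt ν / (1 - μ) ^ ((3 : ℝ) / 2) *
        min (μ * lpNorm 2 u) (lpNorm 2 h * lpNorm 1 u)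

/-- `‖u²‖₁ = ‖u‖₂²`. -/
lemma lpNorm_sq_one (u : ℝ → ℝ) : lpNorm 1 (fun t => u t ^ 2) = lpNorm 2 u ^ 2 := by
  have h1 : eLpNorm (fun t => u t ^ 2) 1 volume = eLpNorm u 2 volume ^ (2:ℝ) := by
    have hfun : (fun t => u t ^ 2) = fun t => ‖u t‖ ^ (2:ℝ) := by
      funext t
      rw [Real.rpow_two, Real.norm_eq_abs, sq_abs]
    rw [hfun, eLpNorm_norm_rpow u (by norm_num : (0:ℝ) < 2)]
    norm_num
  unfold _root_.lpNorm
  rw [h1, ← ENNReal.toReal_rpow, Real.rpow_two]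

lemma sqrt_sq_add_le (x y d : ℝ) (hd : 0 ≤ d) (hy : y ≤ d ^ 2) :
    Real.sqrt (x ^ 2 + y) ≤ |x| + d := by
  have h1 : x ^ 2 + y ≤ (|x| + d) ^ 2 := by
    nlinarith [sq_abs x, abs_nonneg x, mul_nonneg (abs_nonneg x) hd]
  calc Real.sqrt (x ^ 2 + y) ≤ Real.sqrt ((|x| + d) ^ 2) := Real.sqrt_le_sqrt h1
    _ = |x| + d := Real.sqrt_sq (by positivity)

set_option maxHeartbeats 1000000 in
/-- Proposition 5.3(ii): if
`ν ≥ (1/(4(1−μ)))·max{min{‖u²‖₂²/‖u‖₂⁴, ‖h‖₂²/μ²}, min{‖u‖₂²/‖u‖₁², ‖h‖₂²/μ²}}`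
then `𝔏̃'(ν,μ,u,h) ≤ 𝔏̃(ν,μ,u)`. -/
theorem prop_5_3_ii (ν μ : ℝ) (u h : ℝ → ℝ)
    (hν : 0 < ν) (hμ : μ ∈ Set.Ioo (0 : ℝ) 1)
    (hu1 : MemLp u 1 volume) (hu2 : MemLp u 2 volume)
    (hu3 : MemLp u 3 volume) (hu4 : MemLp u 4 volume)
    (hu0 : ¬ u =ᵐ[volume] 0)
    (hhm : Measurable h) (hh0 : ∀ x, 0 ≤ h x) (hhneg : ∀ x ≤ 0, h x = 0)
    (hh1 : Integrable h volume) (hh2 : MemLp h 2 volume)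
    (hhμ : ∫ x, h x = μ)
    (hcond : ν ≥ 1 / (4 * (1 - μ)) *
      max
        (min (lpNorm 2 (fun t => u t ^ 2) ^ 2 / lpNorm 2 u ^ 4)
          (lpNorm 2 h ^ 2 / μ ^ 2))
        (min (lpNorm 2 u ^ 2 / lpNorm 1 u ^ 2)
          (lpNorm 2 h ^ 2 / μ ^ 2))) :
    LboundTilde' ν μ u h ≤ LboundTilde ν μ u := by
  obtain ⟨hμ0, hμ1⟩ := hμ
  have hk : (0:ℝ) < 1 - μ := by linarith
  have ha0 : 0 < lpNorm 2 u := by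
    have hne : eLpNorm u 2 volume ≠ 0 := by
      rw [ne_eq, eLpNorm_eq_zero_iff hu2.1 (by norm_num)]
      exact hu0
    exact ENNReal.toReal_pos hne hu2.2.ne
  have hc0 : 0 < lpNorm 1 u := by
    have hne : eLpNorm u 1 volume ≠ 0 := by
      rw [ne_eq, eLpNorm_eq_zero_iff hu1.1 (by norm_num)]
      exact hu0
    exact ENNReal.toReal_pos hne hu1.2.ne
  unfold LboundTilde' LboundTilde Lbound' Lbound
  rw [lpNorm_sq_one u]
  set a := lpNorm 2 u with ha
  set b := lpNorm 2 (fun t => u t ^ 2) with hb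
  set c := lpNorm 1 u with hc
  set Hn := lpNorm 2 h with hHn
  have hb0 : 0 ≤ b := ENNReal.toReal_nonneg
  have hH0 : 0 ≤ Hn := ENNReal.toReal_nonneg
  -- consequences of hcond
  have e1 : min (b ^ 2 / a ^ 4) (Hn ^ 2 / μ ^ 2) ≤ 4 * ν * (1 - μ) := by
    have h1 : 1 / (4 * (1 - μ)) * min (b ^ 2 / a ^ 4) (Hn ^ 2 / μ ^ 2) ≤ ν :=
      le_trans (mul_le_mul_of_nonneg_left (le_max_left _ _) (by positivity)) hcond
    have h2 : (0:ℝ) < 4 * (1 - μ) := by linarith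
    rw [div_mul_eq_mul_div, one_mul, div_le_iff₀ h2] at h1
    linarith [h1]
  have e2 : min (a ^ 2 / c ^ 2) (Hn ^ 2 / μ ^ 2) ≤ 4 * ν * (1 - μ) := by
    have h1 : 1 / (4 * (1 - μ)) * min (a ^ 2 / c ^ 2) (Hn ^ 2 / μ ^ 2) ≤ ν :=
      le_trans (mul_le_mul_of_nonneg_left (le_max_right _ _) (by positivity)) hcond
    have h2 : (0:ℝ) < 4 * (1 - μ) := by linarith
    rw [div_mul_eq_mul_div, one_mul, div_le_iff₀ h2] at h1
    linarith [h1]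
  -- key bound 1
  have key1 : min (μ ^ 2 * b ^ 2) (Hn ^ 2 * (a ^ 2) ^ 2) ≤ 4 * ν * (1 - μ) * μ ^ 2 * a ^ 4 := by
    rcases le_total (b ^ 2 / a ^ 4) (Hn ^ 2 / μ ^ 2) with hco | hco
    · have := min_eq_left hco ▸ e1
      have hbb : b ^ 2 ≤ 4 * ν * (1 - μ) * a ^ 4 := by
        rw [div_le_iff₀ (by positivity)] at this; linarith
      calc min (μ ^ 2 * b ^ 2) (Hn ^ 2 * (a ^ 2) ^ 2) ≤ μ ^ 2 * b ^ 2 := min_le_left _ _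
        _ ≤ 4 * ν * (1 - μ) * μ ^ 2 * a ^ 4 := by nlinarith [sq_nonneg μ]
    · have := min_eq_right hco ▸ e1
      have hhh : Hn ^ 2 ≤ 4 * ν * (1 - μ) * μ ^ 2 := by
        rw [div_le_iff₀ (by positivity)] at this; linarith
      calc min (μ ^ 2 * b ^ 2) (Hn ^ 2 * (a ^ 2) ^ 2) ≤ Hn ^ 2 * (a ^ 2) ^ 2 := min_le_right _ _
        _ ≤ 4 * ν * (1 - μ) * μ ^ 2 * a ^ 4 := by nlinarith [pow_pos ha0 4]
  -- key bound 2
  have hm0 : 0 ≤ min (μ * a) (Hn * c) := le_min (by positivity) (by positivity)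
  have key2 : min (μ * a) (Hn * c) ^ 2 ≤ 4 * ν * (1 - μ) * μ ^ 2 * c ^ 2 := by
    rcases le_total (a ^ 2 / c ^ 2) (Hn ^ 2 / μ ^ 2) with hco | hco
    · have := min_eq_left hco ▸ e2
      have haa : a ^ 2 ≤ 4 * ν * (1 - μ) * c ^ 2 := by
        rw [div_le_iff₀ (by positivity)] at this; linarith
      have h1 : min (μ * a) (Hn * c) ≤ μ * a := min_le_left _ _
      nlinarith [sq_nonneg μ, hm0]
    · have := min_eq_right hco ▸ e2
      have hhh : Hn ^ 2 ≤ 4 * ν * (1 - μ) * μ ^ 2 := by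
        rw [div_le_iff₀ (by positivity)] at this; linarith
      have h1 : min (μ * a) (Hn * c) ≤ Hn * c := min_le_right _ _
      nlinarith [sq_nonneg c, hm0]
  -- rpow facts
  have hk32 : 0 < (1 - μ) ^ ((3:ℝ)/2) := Real.rpow_pos_of_pos hk _
  have hk32sq : ((1 - μ) ^ ((3:ℝ)/2)) ^ 2 = (1 - μ) ^ 3 := by
    rw [← Real.rpow_natCast ((1 - μ) ^ ((3:ℝ)/2)) 2, ← Real.rpow_mul hk.le,
      ← Real.rpow_natCast (1 - μ) 3]
    norm_num
  -- T2
  have T2 : Real.sqrt ν / (1 - μ) ^ ((3:ℝ)/2) * min (μ * a) (Hn * c)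
      ≤ 2 * ν * μ / (1 - μ) * c := by
    have hL : 0 ≤ Real.sqrt ν / (1 - μ) ^ ((3:ℝ)/2) * min (μ * a) (Hn * c) :=
      mul_nonneg (div_nonneg (Real.sqrt_nonneg _) hk32.le) hm0
    have hR : 0 ≤ 2 * ν * μ / (1 - μ) * c :=
      mul_nonneg (div_nonneg (by positivity) hk.le) hc0.le
    rw [← Real.sqrt_sq hL, ← Real.sqrt_sq hR]
    apply Real.sqrt_le_sqrt
    have eL : (Real.sqrt ν / (1 - μ) ^ ((3:ℝ)/2) * min (μ * a) (Hn * c)) ^ 2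
        = ν * min (μ * a) (Hn * c) ^ 2 / (1 - μ) ^ 3 := by
      rw [mul_pow, div_pow, Real.sq_sqrt hν.le, hk32sq]; ring
    have eR : (2 * ν * μ / (1 - μ) * c) ^ 2 = 4 * ν ^ 2 * μ ^ 2 * c ^ 2 / (1 - μ) ^ 2 := by
      rw [mul_pow, div_pow]; ring
    rw [eL, eR, div_le_div_iff₀ (pow_pos hk 3) (pow_pos hk 2)]
    have h3 := mul_le_mul_of_nonneg_left key2 (by positivity : (0:ℝ) ≤ ν * (1 - μ) ^ 2)
    calc ν * min (μ * a) (Hn * c) ^ 2 * (1 - μ) ^ 2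
        = ν * (1 - μ) ^ 2 * min (μ * a) (Hn * c) ^ 2 := by ring
      _ ≤ ν * (1 - μ) ^ 2 * (4 * ν * (1 - μ) * μ ^ 2 * c ^ 2) := h3
      _ = 4 * ν ^ 2 * μ ^ 2 * c ^ 2 * (1 - μ) ^ 3 := by ring
  -- T1
  set X := 1 - ν / (1 - μ) * a ^ 2 with hX
  set Y := ν / (1 - μ) ^ 3 * min (μ ^ 2 * b ^ 2) (Hn ^ 2 * (a ^ 2) ^ 2) with hY
  have hD0 : 0 ≤ 2 * ν * μ / (1 - μ) * a ^ 2 :=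
    mul_nonneg (div_nonneg (by positivity) hk.le) (sq_nonneg a)
  have hYD : Y ≤ (2 * ν * μ / (1 - μ) * a ^ 2) ^ 2 := by
    have h1 : Y ≤ ν / (1 - μ) ^ 3 * (4 * ν * (1 - μ) * μ ^ 2 * a ^ 4) :=
      mul_le_mul_of_nonneg_left key1 (div_nonneg hν.le (pow_pos hk 3).le)
    have h2 : ν / (1 - μ) ^ 3 * (4 * ν * (1 - μ) * μ ^ 2 * a ^ 4)
        = (2 * ν * μ / (1 - μ) * a ^ 2) ^ 2 := by
      field_simp; ring
    linarith
  have T1 : Real.sqrt (X ^ 2 + Y) ≤ |X| + 2 * ν * μ / (1 - μ) * a ^ 2 :=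
    sqrt_sq_add_le X Y _ hD0 hYD
  have sT1 : Real.sqrt (2 / π) * Real.sqrt (X ^ 2 + Y)
      ≤ Real.sqrt (2 / π) * |X| + Real.sqrt (2 / π) * (2 * ν * μ / (1 - μ) * a ^ 2) := by
    calc Real.sqrt (2 / π) * Real.sqrt (X ^ 2 + Y)
        ≤ Real.sqrt (2 / π) * (|X| + 2 * ν * μ / (1 - μ) * a ^ 2) :=
          mul_le_mul_of_nonneg_left T1 (Real.sqrt_nonneg _)
      _ = Real.sqrt (2 / π) * |X| + Real.sqrt (2 / π) * (2 * ν * μ / (1 - μ) * a ^ 2) := by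
          ring
  have hid : 2 * Real.sqrt (2 / π) * ν * μ * (2 - μ) / (1 - μ) ^ 2 * a ^ 2
      = 2 * Real.sqrt (2 / π) * ν * μ / (1 - μ) ^ 2 * a ^ 2
        + Real.sqrt (2 / π) * (2 * ν * μ / (1 - μ) * a ^ 2) := by
    field_simp; ring
  linarith [sT1, T2, hid]
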